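/- Let X, Y be compact metric spaces, f : X → X and g : Y → Y continuous surjections, and φ : X̄ → Ȳ a continuous map between the inverse limits with ḡ∘φ = φ∘f̄. Suppose there exist l ∈ ℕ and ε > 0 such that for all u, v ∈ Y, g^l(u) ≠ g^l(v) implies there is K ≥ 0 with d(g^K(u), g^K(v)) ≥ ε. Then there exists n ∈ ℕ such that for all a, b ∈ X̄, π_n(a) = π_n(b) implies π₀(φ(a)) = π₀(φ(b)), where π_i denotes projection of the inverse limit onto its i-th coordinate. -/
import Mathlib


/-- The inverse limit of a self-map `f : X → X`. -/
def InvLim {X : Type*} (f : X → X) : Type _ :=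
  {x : ℕ → X // ∀ n, f (x (n + 1)) = x n}

instance {X : Type*} [TopologicalSpace X] (f : X → X) : TopologicalSpace (InvLim f) :=
  inferInstanceAs (TopologicalSpace {x : ℕ → X // ∀ n, f (x (n + 1)) = x n})

/-- The shift map `f̄(x₀,x₁,…) = (f(x₀),x₀,x₁,…)` on the inverse limit. -/
def shiftMap {X : Type*} (f : X → X) (x : InvLim f) : InvLim f :=
  ⟨fun n => Nat.casesOn n (f (x.1 0)) (fun k => x.1 k), by
    intro n
    cases n with
    | zero => rfl
    | succ k => exact x.2 k⟩

lemma InvLim.iterate_apply {X : Type*} (f : X → X) (x : InvLim f) :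
    ∀ (k n : ℕ), f^[k] (x.1 (n + k)) = x.1 n := by
  intro k
  induction k with
  | zero => intro n; rfl
  | succ k ih =>
    intro n
    have h1 : f (x.1 (n + k + 1)) = x.1 (n + k) := x.2 (n + k)
    calc f^[k + 1] (x.1 (n + (k + 1))) = f^[k] (f (x.1 (n + k + 1))) :=
          Function.iterate_succ_apply f k _
      _ = f^[k] (x.1 (n + k)) := by rw [h1]
      _ = x.1 n := ih n

lemma shift_coord_ge {X : Type*} (f : X → X) :
    ∀ (k : ℕ) (x : InvLim f) (i : ℕ), ((shiftMap f)^[k] x).1 (i + k) = x.1 i := by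
  intro k
  induction k with
  | zero => intro x i; rfl
  | succ k ih =>
    intro x i
    rw [Function.iterate_succ_apply']
    show ((shiftMap f) ((shiftMap f)^[k] x)).1 (i + k + 1) = x.1 i
    exact ih x i

lemma shift_coord_le {X : Type*} (f : X → X) :
    ∀ (k : ℕ) (x : InvLim f) (i : ℕ), i ≤ k →
      ((shiftMap f)^[k] x).1 i = f^[k - i] (x.1 0) := by
  intro k
  induction k with
  | zero =>
    intro x i hi
    interval_cases i
    rfl
  | succ k ih =>
    intro x i hi
    rw [Function.iterate_succ_apply']
    cases i with
    | zero =>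
      show f (((shiftMap f)^[k] x).1 0) = f^[k + 1 - 0] (x.1 0)
      rw [ih x 0 (Nat.zero_le _), Nat.sub_zero, Nat.sub_zero,
        ← Function.iterate_succ_apply' f]
    | succ j =>
      show ((shiftMap f)^[k] x).1 j = f^[k + 1 - (j + 1)] (x.1 0)
      have : k + 1 - (j + 1) = k - j := by omega
      rw [this]
      exact ih x j (by omega)

private lemma clusterPt_mem_closed {c : ℝ} {u : ℕ → ℝ} {s : Set ℝ} (hs : IsClosed s)
    (h : MapClusterPt c Filter.atTop u) (hev : ∀ᶠ n in Filter.atTop, u n ∈ s) : c ∈ s := by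
  have hle : Filter.map u Filter.atTop ≤ Filter.principal s := by
    rwa [Filter.le_principal_iff, Filter.mem_map]
  have : ClusterPt c (Filter.principal s) := (h.clusterPt).mono hle
  rw [← hs.closure_eq]
  exact mem_closure_iff_clusterPt.mpr this

/-- Lemma 2.16: if `φ : X̄ → Ȳ` is continuous with `ḡ∘φ = φ∘f̄`, and `g`
satisfies the weak expansivity condition of Lemma 2.8, then there is `n` such that
`π_n(a) = π_n(b)` implies `π₀(φ(a)) = π₀(φ(b))`. -/
theorem stmt13 {X Y : Type*} [MetricSpace X] [CompactSpace X]
    [MetricSpace Y] [CompactSpace Y]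
    (f : X → X) (g : Y → Y) (hf : Continuous f) (hg : Continuous g)
    (hfs : Function.Surjective f) (hgs : Function.Surjective g)
    (φ : InvLim f → InvLim g) (hφ : Continuous φ)
    (hcomm : ∀ x, φ (shiftMap f x) = shiftMap g (φ x))
    (l : ℕ) (ε : ℝ) (hε : 0 < ε)
    (hexp : ∀ u v : Y, g^[l] u ≠ g^[l] v → ∃ K : ℕ, ε ≤ dist (g^[K] u) (g^[K] v)) :
    ∃ n : ℕ, ∀ a b : InvLim f, a.1 n = b.1 n → (φ a).1 0 = (φ b).1 0 := by
  -- agreement at coordinate n implies agreement below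
  have hagree : ∀ (a b : InvLim f) (n i : ℕ), i ≤ n → a.1 n = b.1 n → a.1 i = b.1 i := by
    intro a b n i hin hn
    have ha := InvLim.iterate_apply f a (n - i) i
    have hb := InvLim.iterate_apply f b (n - i) i
    have hni : i + (n - i) = n := by omega
    rw [hni] at ha hb
    rw [← ha, ← hb, hn]
  -- compactness of the inverse limit
  haveI hcX : CompactSpace (InvLim f) := by
    have hclosed : IsClosed {x : ℕ → X | ∀ n, f (x (n + 1)) = x n} := by
      have : {x : ℕ → X | ∀ n, f (x (n + 1)) = x n}
          = ⋂ n, {x : ℕ → X | f (x (n + 1)) = x n} := by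
        ext x; simp [Set.mem_iInter]
      rw [this]
      exact isClosed_iInter fun n =>
        isClosed_eq (hf.comp (continuous_apply (n + 1))) (continuous_apply n)
    exact isCompact_iff_compactSpace.mp hclosed.isCompact
  -- Claim A : uniform continuity at coordinate 0
  have claimA : ∃ N : ℕ, ∀ a b : InvLim f, a.1 N = b.1 N →
      dist ((φ a).1 0) ((φ b).1 0) < ε := by
    by_contra hN
    push_neg at hN
    choose A B hAB hd using hN
    have hne : (Filter.map (fun n => (A n, B n)) Filter.atTop).NeBot :=
      Filter.map_neBot
    obtain ⟨p, hp⟩ := exists_clusterPt_of_compactSpace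
      (Filter.map (fun n => (A n, B n)) Filter.atTop)
    have hmcp : MapClusterPt p Filter.atTop (fun n => (A n, B n)) := hp
    -- the two components of p are equal
    have hpeq : p.1 = p.2 := by
      have hco : ∀ i : ℕ, p.1.1 i = p.2.1 i := by
        intro i
        have hcont : ContinuousAt (fun q : InvLim f × InvLim f => dist (q.1.1 i) (q.2.1 i)) p := by
          apply Continuous.continuousAt
          exact Continuous.dist
            (((continuous_apply i).comp continuous_subtype_val).comp continuous_fst)
            (((continuous_apply i).comp continuous_subtype_val).comp continuous_snd)
        have h2 := MapClusterPt.continuousAt_comp hcont hmcp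
        have hev : ∀ᶠ n in Filter.atTop,
            ((fun q : InvLim f × InvLim f => dist (q.1.1 i) (q.2.1 i)) ∘ fun n => (A n, B n)) n
              ∈ {r : ℝ | r ≤ 0} := by
          filter_upwards [Filter.eventually_ge_atTop i] with n hn
          have : (A n).1 i = (B n).1 i := hagree (A n) (B n) n i hn (hAB n)
          simp [Function.comp, this]
        have := clusterPt_mem_closed (isClosed_le continuous_id continuous_const) h2 hev
        have h0 : dist (p.1.1 i) (p.2.1 i) ≤ 0 := this
        exact dist_le_zero.mp h0
      exact Subtype.ext (funext hco)
    -- but the images are ε-separated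
    have hcont2 : ContinuousAt
        (fun q : InvLim f × InvLim f => dist ((φ q.1).1 0) ((φ q.2).1 0)) p := by
      apply Continuous.continuousAt
      exact Continuous.dist
        (((continuous_apply 0).comp continuous_subtype_val).comp (hφ.comp continuous_fst))
        (((continuous_apply 0).comp continuous_subtype_val).comp (hφ.comp continuous_snd))
    have h2 := MapClusterPt.continuousAt_comp hcont2 hmcp
    have hev : ∀ᶠ n in Filter.atTop,
        ((fun q : InvLim f × InvLim f => dist ((φ q.1).1 0) ((φ q.2).1 0)) ∘
          fun n => (A n, B n)) n ∈ {r : ℝ | ε ≤ r} := by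
      filter_upwards with n
      exact hd n
    have hfin := clusterPt_mem_closed (isClosed_le continuous_const continuous_id) h2 hev
    have : ε ≤ dist ((φ p.1).1 0) ((φ p.2).1 0) := hfin
    rw [hpeq] at this
    simp at this
    linarith
  obtain ⟨N, hNprop⟩ := claimA
  -- iterated commuting
  have hcommK : ∀ (k : ℕ) (x : InvLim f), φ ((shiftMap f)^[k] x) = (shiftMap g)^[k] (φ x) := by
    intro k
    induction k with
    | zero => intro x; rfl
    | succ k ih =>
      intro x
      rw [Function.iterate_succ_apply', Function.iterate_succ_apply', hcomm, ih]
  -- zero coordinate of g-shift iterate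
  have hzero : ∀ (k : ℕ) (y : InvLim g), ((shiftMap g)^[k] y).1 0 = g^[k] (y.1 0) := by
    intro k y
    have := shift_coord_le g k y 0 (Nat.zero_le _)
    simpa using this
  refine ⟨N + l, fun a b hab => ?_⟩
  -- left shifts of a and b by l
  have mkshift : ∀ x : InvLim f, ∃ y : InvLim f,
      (∀ i, y.1 i = x.1 (i + l)) ∧ (shiftMap f)^[l] y = x := by
    intro x
    have hprop : ∀ n, f ((fun i => x.1 (i + l)) (n + 1)) = (fun i => x.1 (i + l)) n := by
      intro i
      show f (x.1 (i + 1 + l)) = x.1 (i + l)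
      have h : i + 1 + l = i + l + 1 := by omega
      rw [h]
      exact x.2 (i + l)
    refine ⟨⟨fun i => x.1 (i + l), hprop⟩, fun i => rfl, ?_⟩
    apply Subtype.ext
    funext i
    by_cases hi : l ≤ i
    · have h := shift_coord_ge f l ⟨fun i => x.1 (i + l), hprop⟩ (i - l)
      have h2 : i - l + l = i := by omega
      rw [h2] at h
      rw [h]
      show x.1 (i - l + l) = x.1 i
      rw [h2]
    · have h := shift_coord_le f l ⟨fun i => x.1 (i + l), hprop⟩ i (by omega)
      rw [h]
      show f^[l - i] (x.1 (0 + l)) = x.1 i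
      have h3 : 0 + l = i + (l - i) := by omega
      rw [h3]
      exact InvLim.iterate_apply f x (l - i) i
  obtain ⟨a', ha'c, ha'⟩ := mkshift a
  obtain ⟨b', hb'c, hb'⟩ := mkshift b
  -- (φ a).1 0 = g^[l] ((φ a').1 0)
  have hA : (φ a).1 0 = g^[l] ((φ a').1 0) := by
    rw [← ha', hcommK, hzero]
  have hB : (φ b).1 0 = g^[l] ((φ b').1 0) := by
    rw [← hb', hcommK, hzero]
  by_contra hne0
  rw [hA, hB] at hne0
  obtain ⟨K, hK⟩ := hexp _ _ hne0
  -- g^[K] ((φ a').1 0) = (φ ((shiftMap f)^[K] a')).1 0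
  have hgK : ∀ (x : InvLim f), g^[K] ((φ x).1 0) = (φ ((shiftMap f)^[K] x)).1 0 := by
    intro x
    rw [hcommK, hzero]
  rw [hgK a', hgK b'] at hK
  -- the shifted points agree at coordinate N
  have hagN : ((shiftMap f)^[K] a').1 N = ((shiftMap f)^[K] b').1 N := by
    by_cases hNK : K ≤ N
    · have ha2 := shift_coord_ge f K a' (N - K)
      have hb2 := shift_coord_ge f K b' (N - K)
      have h2 : N - K + K = N := by omega
      rw [h2] at ha2 hb2
      rw [ha2, hb2, ha'c, hb'c]
      exact hagree a b (N + l) (N - K + l) (by omega) hab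
    · have ha2 := shift_coord_le f K a' N (by omega)
      have hb2 := shift_coord_le f K b' N (by omega)
      rw [ha2, hb2, ha'c, hb'c]
      have : a.1 (0 + l) = b.1 (0 + l) := hagree a b (N + l) (0 + l) (by omega) hab
      rw [this]
  have := hNprop _ _ hagN
  linarith
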